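/- The 5×5 matrices F₁ = E₃₂ + (q+q⁻¹)E₄₃ and F₂ = E₂₁ + E₅₄ satisfy the quantum Serre relations: F₂²F₁ - (q² + q⁻²)F₂F₁F₂ + F₁F₂² = 0 and F₁³F₂ - (q² + 1 + q⁻²)F₁²F₂F₁ + (q² + 1 + q⁻²)F₁F₂F₁² - F₂F₁³ = 0, for any nonzero q ∈ ℂ. -/

import Mathlib

open Matrix

def E (i j : Fin 5) : Matrix (Fin 5) (Fin 5) ℂ := Matrix.single i j 1

noncomputable def F₁ (q : ℂ) : Matrix (Fin 5) (Fin 5) ℂ := E 2 1 + (q + q⁻¹) • E 3 2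
noncomputable def F₂ : Matrix (Fin 5) (Fin 5) ℂ := E 1 0 + E 4 3

lemma Emul (i j k l : Fin 5) : E i j * E k l = if j = k then E i l else 0 := by
  unfold E
  by_cases h : j = k
  · subst h; simp [Matrix.single_mul_single_same]
  · simp [h]

theorem quantum_serre_f (q : ℂ) (hq : q ≠ 0) :
    F₂ * F₂ * F₁ q - (q ^ 2 + q⁻¹ ^ 2) • (F₂ * F₁ q * F₂) + F₁ q * F₂ * F₂ = 0 ∧
    F₁ q * F₁ q * F₁ q * F₂ - (q ^ 2 + 1 + q⁻¹ ^ 2) • (F₁ q * F₁ q * F₂ * F₁ q)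
      + (q ^ 2 + 1 + q⁻¹ ^ 2) • (F₁ q * F₂ * F₁ q * F₁ q) - F₂ * F₁ q * F₁ q * F₁ q = 0 := by
  have key : (q + q⁻¹) ^ 2 = q ^ 2 + 1 + q⁻¹ ^ 2 + 1 := by
    field_simp; ring
  constructor <;>
  · simp only [F₁, F₂, mul_add, add_mul, smul_mul_assoc, mul_smul_comm, Emul,
      smul_smul, smul_add, smul_sub]
    norm_num [Emul, ← sub_smul, ← add_smul, smul_smul]
    simp only [Fin.isValue, show ((0:Fin 5)=4)=False from by decide, show ((3:Fin 5)=4)=False from by decide,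
      show ((0:Fin 5)=2)=False from by decide, show ((3:Fin 5)=2)=False from by decide,
      show ((0:Fin 5)=3)=False from by decide, show ((2:Fin 5)=1)=False from by decide,
      show ((1:Fin 5)=4)=False from by decide, show ((1:Fin 5)=2)=False from by decide,
      show ((1:Fin 5)=3)=False from by decide, show ((2:Fin 5)=3)=False from by decide, show ((3:Fin 5)=1)=False from by decide, show ((2:Fin 5)=4)=False from by decide,
      if_false, if_true, add_zero, zero_add, sub_zero, zero_sub, neg_zero]
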